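/- arXiv:2204.02469 — 4 statements merged into one kernel-verified Lean document; each statement's English description precedes it below -/
import Mathlib

section
/- For an n×n complex matrix B and 1 ≤ p < ∞, ω_p([[0, B],[B, 0]]) = 2^{1/p} ω_p(B). -/
open Matrix Complex

noncomputable def schattenNorm {m : Type*} [Fintype m] [DecidableEq m] (p : ℝ)
    (A : Matrix m m ℂ) : ℝ :=
  (∑ i, Real.sqrt ((Matrix.isHermitian_conjTranspose_mul_self A).eigenvalues i) ^ p) ^ (1 / p)

noncomputable def reM {m : Type*} [Fintype m] (X : Matrix m m ℂ) : Matrix m m ℂ :=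
  (2⁻¹ : ℂ) • (X + Xᴴ)

noncomputable def imM {m : Type*} [Fintype m] (X : Matrix m m ℂ) : Matrix m m ℂ :=
  (2 * Complex.I)⁻¹ • (X - Xᴴ)

noncomputable def wp {m : Type*} [Fintype m] [DecidableEq m] (p : ℝ)
    (A : Matrix m m ℂ) : ℝ :=
  ⨆ θ : ℝ, schattenNorm p (reM (Complex.exp (θ * Complex.I) • A))

open Polynomial in
lemma charpoly_conj_aux {m : Type*} [Fintype m] [DecidableEq m]
    (U D : Matrix m m ℂ) (hU : U * star U = 1) (hU' : star U * U = 1) :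
    (U * D * star U).charpoly = D.charpoly := by
  have hmap : ∀ M N : Matrix m m ℂ, (M * N).map (C : ℂ →+* ℂ[X]) = M.map C * N.map C :=
    fun M N => Matrix.map_mul
  have hscal : U.map (C : ℂ →+* ℂ[X]) * Matrix.scalar m (X : ℂ[X]) * (star U).map C
      = Matrix.scalar m (X : ℂ[X]) := by
    rw [(Matrix.scalar_commute (X : ℂ[X]) (fun r => Commute.all _ _) (U.map C)).symm.eq]
    rw [Matrix.mul_assoc, ← hmap, hU]
    simp
  have key : charmatrix (U * D * star U)
      = U.map (C : ℂ →+* ℂ[X]) * charmatrix D * (star U).map C := by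
    unfold charmatrix
    simp only [RingHom.mapMatrix_apply, Matrix.mul_sub, Matrix.sub_mul, hmap]
    rw [hscal]
  unfold Matrix.charpoly
  rw [key, Matrix.det_mul, Matrix.det_mul, mul_comm, ← mul_assoc, ← Matrix.det_mul, ← hmap, hU']
  simp

open Polynomial in
lemma charpoly_diagonal_eq {m : Type*} [Fintype m] [DecidableEq m] (d : m → ℂ) :
    (Matrix.diagonal d).charpoly = ∏ i, (X - C (d i)) := by
  have h : charmatrix (Matrix.diagonal d) = Matrix.diagonal fun i => (X : ℂ[X]) - C (d i) := by
    ext i j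
    by_cases hij : i = j
    · subst hij; simp
    · simp [hij, Matrix.diagonal_apply_ne _ hij]
  rw [Matrix.charpoly, h, Matrix.det_diagonal]

open Polynomial in
lemma charpoly_hermitian {m : Type*} [Fintype m] [DecidableEq m]
    {A : Matrix m m ℂ} (hA : A.IsHermitian) :
    A.charpoly = ∏ i, (X - C ((hA.eigenvalues i : ℂ))) := by
  conv_lhs => rw [hA.spectral_theorem]
  rw [Unitary.conjStarAlgAut_apply]
  rw [charpoly_conj_aux _ _ (Matrix.mem_unitaryGroup_iff.mp (hA.eigenvectorUnitary).2)
    (Matrix.mem_unitaryGroup_iff'.mp (hA.eigenvectorUnitary).2)]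
  rw [charpoly_diagonal_eq]
  rfl

open Polynomial in
lemma roots_charpoly_hermitian {m : Type*} [Fintype m] [DecidableEq m]
    {A : Matrix m m ℂ} (hA : A.IsHermitian) :
    A.charpoly.roots = Finset.univ.val.map (fun i => (hA.eigenvalues i : ℂ)) := by
  rw [charpoly_hermitian hA]
  rw [Finset.prod_eq_multiset_prod,
    show (fun i => (X : ℂ[X]) - C ((hA.eigenvalues i : ℂ)))
      = (fun a : ℂ => (X : ℂ[X]) - C a) ∘ (fun i => (hA.eigenvalues i : ℂ)) from rfl,
    ← Multiset.map_map]
  exact roots_multiset_prod_X_sub_C _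

lemma eig_multiset_blockdiag {m : Type*} [Fintype m] [DecidableEq m]
    {G : Matrix m m ℂ} (hG : G.IsHermitian)
    (hB : (Matrix.fromBlocks G 0 0 G).IsHermitian) :
    (Finset.univ.val.map hB.eigenvalues)
      = Finset.univ.val.map hG.eigenvalues + Finset.univ.val.map hG.eigenvalues := by
  apply Multiset.map_injective Complex.ofReal_injective
  simp only [Multiset.map_add, Multiset.map_map, Function.comp_def]
  have h1 := roots_charpoly_hermitian hB
  have h2 := roots_charpoly_hermitian hG
  have hcp : (Matrix.fromBlocks G 0 0 G).charpoly = G.charpoly * G.charpoly :=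
    Matrix.charpoly_fromBlocks_zero₁₂ G 0 G
  rw [hcp, Polynomial.roots_mul (((G.charpoly_monic).mul G.charpoly_monic).ne_zero), h2] at h1
  exact h1.symm

lemma eig_congr {m : Type*} [Fintype m] [DecidableEq m]
    {A₁ A₂ : Matrix m m ℂ} (h : A₁ = A₂) (h₁ : A₁.IsHermitian) (h₂ : A₂.IsHermitian) :
    h₁.eigenvalues = h₂.eigenvalues := by subst h; rfl

lemma sum_g_blockdiag {m : Type*} [Fintype m] [DecidableEq m]
    {G : Matrix m m ℂ} (hG : G.IsHermitian)
    (hB : (Matrix.fromBlocks G 0 0 G).IsHermitian) (g : ℝ → ℝ) :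
    ∑ i, g (hB.eigenvalues i) = 2 * ∑ i, g (hG.eigenvalues i) := by
  have h := eig_multiset_blockdiag hG hB
  calc ∑ i, g (hB.eigenvalues i)
      = ((Finset.univ.val.map hB.eigenvalues).map g).sum := by
        rw [Multiset.map_map]; rfl
    _ = 2 * ∑ i, g (hG.eigenvalues i) := by
        rw [h, Multiset.map_add, Multiset.sum_add, Multiset.map_map, two_mul]; rfl

lemma schatten_block {m : Type*} [Fintype m] [DecidableEq m] (p : ℝ) (hp : 1 ≤ p)
    (C : Matrix m m ℂ) :
    schattenNorm p (Matrix.fromBlocks 0 C C 0) = (2 : ℝ) ^ (1 / p) * schattenNorm p C := by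
  have hM : (Matrix.fromBlocks 0 C C 0)ᴴ * (Matrix.fromBlocks 0 C C 0)
      = Matrix.fromBlocks (Cᴴ * C) 0 0 (Cᴴ * C) := by
    rw [Matrix.fromBlocks_conjTranspose, Matrix.fromBlocks_multiply]
    simp
  have hB : (Matrix.fromBlocks (Cᴴ * C) 0 0 (Cᴴ * C)).IsHermitian :=
    hM ▸ Matrix.isHermitian_conjTranspose_mul_self _
  have he := eig_congr hM (Matrix.isHermitian_conjTranspose_mul_self _) hB
  unfold schattenNorm
  rw [he]
  rw [sum_g_blockdiag (Matrix.isHermitian_conjTranspose_mul_self C) hB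
    (fun x => Real.sqrt x ^ p)]
  have hS : 0 ≤ ∑ i, Real.sqrt ((Matrix.isHermitian_conjTranspose_mul_self C).eigenvalues i) ^ p :=
    Finset.sum_nonneg fun i _ => Real.rpow_nonneg (Real.sqrt_nonneg _) p
  rw [Real.mul_rpow (by norm_num) hS]

lemma reM_block {m : Type*} [Fintype m] (c : ℂ) (B : Matrix m m ℂ) :
    reM (c • Matrix.fromBlocks 0 B B 0)
      = Matrix.fromBlocks 0 (reM (c • B)) (reM (c • B)) 0 := by
  unfold reM
  ext i j
  cases i <;> cases j <;>
    simp [Matrix.conjTranspose_apply, Matrix.smul_apply, Matrix.add_apply, Matrix.fromBlocks, mul_add]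

theorem stmt_4 {n : ℕ} (p : ℝ) (hp : 1 ≤ p) (B : Matrix (Fin n) (Fin n) ℂ) :
    wp p (Matrix.fromBlocks 0 B B 0) = (2 : ℝ) ^ (1 / p) * wp p B := by
  unfold wp
  rw [Real.mul_iSup_of_nonneg (Real.rpow_nonneg (by norm_num) _)]
  congr 1
  funext θ
  rw [reM_block, schatten_block p hp]
end

section
/- For n×n complex matrices A and B and 1 ≤ p < ∞, ω_p([[0, A],[B, 0]]) = 2^{1/p - 1} sup_{θ ∈ ℝ} ‖e^{iθ}A + e^{-iθ}B*‖_p. -/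
open Matrix Complex

namespace SchattenAux

open Polynomial

variable {m : Type*} [Fintype m] [DecidableEq m]

lemma charpoly_conj (P Q M : Matrix m m ℂ) (h : P * Q = 1) :
    (Q * M * P).charpoly = M.charpoly := by
  have h2 : Q * P = 1 := mul_eq_one_comm.mp h
  set f : Matrix m m ℂ →+* Matrix m m ℂ[X] := (Polynomial.C : ℂ →+* ℂ[X]).mapMatrix with hf
  have hQP : f Q * f P = 1 := by rw [← _root_.map_mul, h2, _root_.map_one]
  have key : charmatrix (Q * M * P) = f Q * charmatrix M * f P := by
    rw [charmatrix, charmatrix, Matrix.mul_sub, Matrix.sub_mul]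
    congr 1
    · rw [mul_assoc, (Matrix.scalar_commute (X : ℂ[X]) (fun r' => Commute.all _ _) (f P)).eq,
        ← mul_assoc, hQP, one_mul]
    · rw [← _root_.map_mul, ← _root_.map_mul]
  unfold Matrix.charpoly
  rw [key, Matrix.det_mul, Matrix.det_mul]
  have hdet : (f Q).det * (f P).det = 1 := by
    rw [← Matrix.det_mul, hQP, Matrix.det_one]
  calc (f Q).det * (charmatrix M).det * (f P).det
      = (charmatrix M).det * ((f Q).det * (f P).det) := by ring
    _ = (charmatrix M).det := by rw [hdet, mul_one]

lemma charpoly_mul_comm (A B : Matrix m m ℂ) : (A * B).charpoly = (B * A).charpoly := by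
  have h1 : (Matrix.fromBlocks 1 A 0 1 : Matrix (m ⊕ m) (m ⊕ m) ℂ) *
      Matrix.fromBlocks 1 (-A) 0 1 = 1 := by
    rw [Matrix.fromBlocks_multiply]
    simp [Matrix.fromBlocks_one]
  have hXP : (Matrix.fromBlocks (A * B) 0 B 0 : Matrix (m ⊕ m) (m ⊕ m) ℂ) *
      Matrix.fromBlocks 1 A 0 1 = Matrix.fromBlocks 1 A 0 1 * Matrix.fromBlocks 0 0 B (B * A) := by
    rw [Matrix.fromBlocks_multiply, Matrix.fromBlocks_multiply]
    simp [Matrix.mul_assoc]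
  have hY : (Matrix.fromBlocks 1 (-A) 0 1 : Matrix (m ⊕ m) (m ⊕ m) ℂ) *
      Matrix.fromBlocks (A * B) 0 B 0 * Matrix.fromBlocks 1 A 0 1 =
      Matrix.fromBlocks 0 0 B (B * A) := by
    rw [Matrix.mul_assoc, hXP, ← Matrix.mul_assoc, mul_eq_one_comm.mp h1, one_mul]
  have hc := charpoly_conj (Matrix.fromBlocks 1 A 0 1) (Matrix.fromBlocks 1 (-A) 0 1)
    (Matrix.fromBlocks (A * B) 0 B 0) h1
  rw [hY, Matrix.charpoly_fromBlocks_zero₁₂, Matrix.charpoly_fromBlocks_zero₁₂] at hc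
  have h0 : ((0 : Matrix m m ℂ)).charpoly ≠ 0 := (Matrix.charpoly_monic _).ne_zero
  have : (0 : Matrix m m ℂ).charpoly * (B * A).charpoly
      = (0 : Matrix m m ℂ).charpoly * (A * B).charpoly := by
    rw [hc]; ring
  exact (mul_left_cancel₀ h0 this).symm

lemma roots_charpoly_diagonal (d : m → ℂ) :
    (Matrix.diagonal d).charpoly.roots = Finset.univ.val.map d := by
  have hch : charmatrix (Matrix.diagonal d) =
      Matrix.diagonal (fun i => (X : ℂ[X]) - C (d i)) := by
    ext i j
    rcases eq_or_ne i j with rfl | hij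
    · rw [charmatrix_apply_eq, Matrix.diagonal_apply_eq, Matrix.diagonal_apply_eq]
    · rw [charmatrix_apply_ne _ _ _ hij, Matrix.diagonal_apply_ne _ hij,
        Matrix.diagonal_apply_ne _ hij, map_zero, neg_zero]
  have h1 : (Matrix.diagonal d).charpoly
      = ((Finset.univ.val.map d).map (fun a => X - C a)).prod := by
    unfold Matrix.charpoly
    rw [hch, Matrix.det_diagonal, Multiset.map_map, Finset.prod_eq_multiset_prod]
    rfl
  rw [h1, Polynomial.roots_multiset_prod_X_sub_C]

lemma roots_charpoly_hermitian {H : Matrix m m ℂ} (hH : H.IsHermitian) :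
    H.charpoly.roots = Finset.univ.val.map (fun i => ((hH.eigenvalues i : ℝ) : ℂ)) := by
  have hU : (star (hH.eigenvectorUnitary : Matrix m m ℂ)) *
      (hH.eigenvectorUnitary : Matrix m m ℂ) = 1 := by
    exact Matrix.mem_unitaryGroup_iff'.mp hH.eigenvectorUnitary.2
  have hsp := hH.spectral_theorem
  have hcp : H.charpoly = (Matrix.diagonal (RCLike.ofReal ∘ hH.eigenvalues)).charpoly := by
    conv_lhs => rw [hsp]
    exact charpoly_conj _ _ _ hU
  rw [hcp, roots_charpoly_diagonal]
  exact Multiset.map_congr rfl (fun i _ => rfl)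

lemma sum_f_eigenvalues {H : Matrix m m ℂ} (hH : H.IsHermitian) (f : ℝ → ℝ) :
    ∑ i, f (hH.eigenvalues i) = (H.charpoly.roots.map (fun z => f z.re)).sum := by
  rw [roots_charpoly_hermitian hH, Multiset.map_map, Finset.sum_eq_multiset_sum]
  exact congrArg Multiset.sum (Multiset.map_congr rfl (fun i _ => by simp))

lemma schattenNorm_eq (p : ℝ) (A : Matrix m m ℂ) :
    schattenNorm p A
      = (((Aᴴ * A).charpoly.roots.map (fun z => Real.sqrt z.re ^ p)).sum) ^ (1 / p) := by
  unfold schattenNorm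
  rw [sum_f_eigenvalues (Matrix.isHermitian_conjTranspose_mul_self A) (fun x => Real.sqrt x ^ p)]

lemma rootsum_nonneg (p : ℝ) (q : Polynomial ℂ) :
    0 ≤ (q.roots.map (fun z => Real.sqrt z.re ^ p)).sum :=
  Multiset.sum_nonneg (by
    intro x hx
    obtain ⟨z, _, rfl⟩ := Multiset.mem_map.mp hx
    exact Real.rpow_nonneg (Real.sqrt_nonneg _) _)

lemma schattenNorm_block (p : ℝ) (D : Matrix m m ℂ) :
    schattenNorm p (Matrix.fromBlocks 0 D Dᴴ 0) = (2 : ℝ) ^ (1 / p) * schattenNorm p D := by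
  rw [schattenNorm_eq, schattenNorm_eq]
  have hmul : (Matrix.fromBlocks (0 : Matrix m m ℂ) D Dᴴ 0)ᴴ * Matrix.fromBlocks 0 D Dᴴ 0
      = Matrix.fromBlocks (D * Dᴴ) 0 0 (Dᴴ * D) := by
    rw [Matrix.fromBlocks_conjTranspose, Matrix.fromBlocks_multiply]
    simp
  rw [hmul, Matrix.charpoly_fromBlocks_zero₁₂, charpoly_mul_comm D Dᴴ,
    Polynomial.roots_mul (mul_ne_zero (Matrix.charpoly_monic _).ne_zero
      (Matrix.charpoly_monic _).ne_zero),
    Multiset.map_add, Multiset.sum_add, ← two_mul,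
    Real.mul_rpow (by norm_num) (rootsum_nonneg p _)]

lemma schattenNorm_real_smul (p : ℝ) (hp : 1 ≤ p) (r : ℝ) (hr : 0 ≤ r) (C : Matrix m m ℂ) :
    schattenNorm p ((r : ℂ) • C) = r * schattenNorm p C := by
  have hp0 : p ≠ 0 := by positivity
  rw [schattenNorm_eq, schattenNorm_eq]
  set hH := Matrix.isHermitian_conjTranspose_mul_self C with hHdef
  have h1 : ((r : ℂ) • C)ᴴ * ((r : ℂ) • C) = ((r ^ 2 : ℝ) : ℂ) • (Cᴴ * C) := by
    rw [Matrix.conjTranspose_smul, Matrix.smul_mul, Matrix.mul_smul, smul_smul]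
    push_cast
    rw [Complex.star_def, Complex.conj_ofReal]
    ring_nf
  have hU : (star (hH.eigenvectorUnitary : Matrix m m ℂ)) *
      (hH.eigenvectorUnitary : Matrix m m ℂ) = 1 :=
    Matrix.mem_unitaryGroup_iff'.mp hH.eigenvectorUnitary.2
  have h2 : ((r ^ 2 : ℝ) : ℂ) • (Cᴴ * C)
      = (hH.eigenvectorUnitary : Matrix m m ℂ) *
        Matrix.diagonal (fun i => ((r ^ 2 * hH.eigenvalues i : ℝ) : ℂ)) *
        (star (hH.eigenvectorUnitary : Matrix m m ℂ)) := by
    conv_lhs => rw [hH.spectral_theorem]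
    rw [Unitary.conjStarAlgAut_apply]
    rw [← Matrix.smul_mul, ← Matrix.mul_smul, ← Matrix.diagonal_smul]
    have harg : ((r ^ 2 : ℝ) : ℂ) • (RCLike.ofReal ∘ hH.eigenvalues)
        = fun i => ((r ^ 2 * hH.eigenvalues i : ℝ) : ℂ) := by
      funext i
      simp only [Pi.smul_apply, Function.comp_apply, smul_eq_mul]
      push_cast
      rfl
    rw [harg]
  have hroots : (((r : ℂ) • C)ᴴ * ((r : ℂ) • C)).charpoly.roots
      = Finset.univ.val.map (fun i => ((r ^ 2 * hH.eigenvalues i : ℝ) : ℂ)) := by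
    rw [h1, h2, charpoly_conj _ _ _ hU, roots_charpoly_diagonal]
  rw [hroots, Multiset.map_map]
  have hsum : (Finset.univ.val.map
      ((fun z : ℂ => Real.sqrt z.re ^ p) ∘ fun i => ((r ^ 2 * hH.eigenvalues i : ℝ) : ℂ))).sum
      = r ^ p * (((Cᴴ * C).charpoly.roots.map (fun z => Real.sqrt z.re ^ p)).sum) := by
    rw [roots_charpoly_hermitian hH, Multiset.map_map, ← Multiset.sum_map_mul_left]
    refine congrArg Multiset.sum (Multiset.map_congr rfl (fun i _ => ?_))
    simp only [Function.comp_apply, Complex.ofReal_re]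
    rw [Real.sqrt_mul (sq_nonneg r), Real.sqrt_sq hr,
      Real.mul_rpow hr (Real.sqrt_nonneg _)]
  rw [hsum, Real.mul_rpow (Real.rpow_nonneg hr _) (rootsum_nonneg p _),
    ← Real.rpow_mul hr, mul_one_div_cancel hp0, Real.rpow_one]

lemma star_exp_theta (θ : ℝ) :
    star (Complex.exp ((θ : ℂ) * Complex.I)) = Complex.exp (-((θ : ℂ) * Complex.I)) := by
  rw [Complex.star_def, ← Complex.exp_conj]
  congr 1
  simp [Complex.conj_ofReal]

lemma reM_eq_block {n : ℕ} (θ : ℝ) (A B : Matrix (Fin n) (Fin n) ℂ) :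
    reM (Complex.exp (θ * Complex.I) • Matrix.fromBlocks 0 A B 0)
      = Matrix.fromBlocks 0
          ((2⁻¹ : ℂ) • (Complex.exp (θ * Complex.I) • A + Complex.exp (-(θ * Complex.I)) • Bᴴ))
          (((2⁻¹ : ℂ) •
            (Complex.exp (θ * Complex.I) • A + Complex.exp (-(θ * Complex.I)) • Bᴴ))ᴴ) 0 := by
  have h2 : star (Complex.exp (-((θ : ℂ) * Complex.I))) = Complex.exp ((θ : ℂ) * Complex.I) := by
    rw [← star_exp_theta θ, star_star]
  unfold reM
  rw [Matrix.fromBlocks_smul]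
  simp only [smul_zero, Matrix.fromBlocks_conjTranspose, Matrix.conjTranspose_zero,
    Matrix.conjTranspose_smul, star_exp_theta, h2, Matrix.fromBlocks_add, add_zero, zero_add,
    Matrix.fromBlocks_smul, Matrix.conjTranspose_add, Matrix.conjTranspose_conjTranspose,
    star_inv₀, star_ofNat]
  rw [add_comm (Complex.exp ((θ : ℂ) * Complex.I) • B)]

end SchattenAux

theorem stmt_5 {n : ℕ} (p : ℝ) (hp : 1 ≤ p) (A B : Matrix (Fin n) (Fin n) ℂ) :
    wp p (Matrix.fromBlocks 0 A B 0) =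
      (2 : ℝ) ^ (1 / p - 1) *
        ⨆ θ : ℝ, schattenNorm p
          (Complex.exp (θ * Complex.I) • A + Complex.exp (-(θ * Complex.I)) • Bᴴ) := by
  have key : ∀ θ : ℝ, schattenNorm p (reM (Complex.exp (θ * Complex.I) •
        Matrix.fromBlocks 0 A B 0))
      = (2 : ℝ) ^ (1 / p - 1) * schattenNorm p
          (Complex.exp (θ * Complex.I) • A + Complex.exp (-(θ * Complex.I)) • Bᴴ) := by
    intro θ
    rw [SchattenAux.reM_eq_block θ A B, SchattenAux.schattenNorm_block p,
      show ((2⁻¹ : ℂ)) = (((2⁻¹ : ℝ) : ℂ)) by norm_num,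
      SchattenAux.schattenNorm_real_smul p hp 2⁻¹ (by norm_num),
      show (2 : ℝ) ^ (1 / p - 1) = 2 ^ (1 / p) * 2⁻¹ by
        rw [Real.rpow_sub two_pos, Real.rpow_one]; ring]
    ring
  unfold wp
  simp_rw [key]
  exact (Real.mul_iSup_of_nonneg (Real.rpow_nonneg (by norm_num) _) _).symm
end

section
/- For n×n complex matrices A and B and 1 ≤ p < ∞, ω_p(A ⊕ B) ≤ (ω_p(A)^p + ω_p(B)^p)^{1/p}. -/
open Matrix Complex

open Polynomial

lemma my_charpoly_eq {m : Type*} [Fintype m] [DecidableEq m] {M : Matrix m m ℂ}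
    (hM : M.IsHermitian) :
    M.charpoly = ∏ i, (X - C (hM.eigenvalues i : ℂ)) := by
  set u : Matrix m m ℂ := (hM.eigenvectorUnitary : Matrix m m ℂ) with hu_def
  set d : m → ℂ := (fun i => (hM.eigenvalues i : ℂ)) with hd_def
  have hu : u * star u = 1 := Matrix.mem_unitaryGroup_iff.mp hM.eigenvectorUnitary.2
  have hu' : star u * u = 1 := mul_eq_one_comm.mp hu
  have hspec : M = u * Matrix.diagonal d * star u := by
    simpa [hd_def, Function.comp_def] using hM.spectral_theorem
  have hcomm : (C : ℂ →+* ℂ[X]).mapMatrix u * Matrix.scalar m (X : ℂ[X])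
      = Matrix.scalar m (X : ℂ[X]) * (C : ℂ →+* ℂ[X]).mapMatrix u :=
    ((Matrix.scalar_commute (X : ℂ[X]) (fun r' => mul_comm _ _) _).eq).symm
  have hcm : charmatrix M =
      (C : ℂ →+* ℂ[X]).mapMatrix u * charmatrix (Matrix.diagonal d)
        * (C : ℂ →+* ℂ[X]).mapMatrix (star u) := by
    rw [charmatrix, charmatrix, mul_sub, sub_mul]
    congr 1
    · rw [hcomm, mul_assoc, ← _root_.map_mul, hu]; simp
    · rw [← _root_.map_mul, ← _root_.map_mul, hspec]
  have h1 : (C : ℂ →+* ℂ[X]).mapMatrix (star u) * (C : ℂ →+* ℂ[X]).mapMatrix u = 1 := by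
    rw [← _root_.map_mul ((C : ℂ →+* ℂ[X]).mapMatrix), hu']; exact _root_.map_one _
  have hdet : M.charpoly = (Matrix.diagonal d).charpoly := by
    rw [Matrix.charpoly, hcm, Matrix.det_mul, Matrix.det_mul, mul_comm, ← mul_assoc,
      ← Matrix.det_mul, h1, Matrix.det_one, one_mul]
    rfl
  have hdc : charmatrix (Matrix.diagonal d) = Matrix.diagonal (fun i => X - C (d i)) := by
    ext i j
    by_cases h : i = j
    · subst h; simp
    · simp [charmatrix_apply_ne _ _ _ h, Matrix.diagonal_apply_ne _ h]
  rw [hdet, Matrix.charpoly, hdc, Matrix.det_diagonal]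

lemma my_roots_eq {m : Type*} [Fintype m] [DecidableEq m] {M : Matrix m m ℂ}
    (hM : M.IsHermitian) :
    M.charpoly.roots = (Finset.univ.val.map hM.eigenvalues).map (fun r : ℝ => (r : ℂ)) := by
  rw [my_charpoly_eq hM]
  have : ∏ i, (X - C (hM.eigenvalues i : ℂ))
      = (((Finset.univ.val.map hM.eigenvalues).map (fun r : ℝ => (r : ℂ))).map
          (fun a : ℂ => X - C a)).prod := by
    rw [Multiset.map_map, Multiset.map_map]
    rfl
  rw [this, roots_multiset_prod_X_sub_C]

lemma my_eig_multiset_blocks {k : ℕ} {P Q : Matrix (Fin k) (Fin k) ℂ}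
    {M : Matrix (Fin k ⊕ Fin k) (Fin k ⊕ Fin k) ℂ}
    (hM : M.IsHermitian) (hP : P.IsHermitian) (hQ : Q.IsHermitian)
    (hME : M = Matrix.fromBlocks P 0 0 Q) :
    (Finset.univ.val.map hM.eigenvalues)
      = Finset.univ.val.map hP.eigenvalues + Finset.univ.val.map hQ.eigenvalues := by
  have hchar : M.charpoly = P.charpoly * Q.charpoly := by
    rw [hME]; exact Matrix.charpoly_fromBlocks_zero₂₁ P 0 Q
  have hroots : M.charpoly.roots = P.charpoly.roots + Q.charpoly.roots := by
    rw [hchar, roots_mul (mul_ne_zero (Matrix.charpoly_monic P).ne_zero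
      (Matrix.charpoly_monic Q).ne_zero)]
  rw [my_roots_eq hM, my_roots_eq hP, my_roots_eq hQ, ← Multiset.map_add] at hroots
  exact Multiset.map_injective (fun a b => Complex.ofReal_inj.mp) hroots

lemma my_eig_sum_blocks {k : ℕ} {P Q : Matrix (Fin k) (Fin k) ℂ}
    {M : Matrix (Fin k ⊕ Fin k) (Fin k ⊕ Fin k) ℂ}
    (hM : M.IsHermitian) (hP : P.IsHermitian) (hQ : Q.IsHermitian)
    (hME : M = Matrix.fromBlocks P 0 0 Q) (g : ℝ → ℝ) :
    ∑ i, g (hM.eigenvalues i) = ∑ i, g (hP.eigenvalues i) + ∑ i, g (hQ.eigenvalues i) := by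
  have key := my_eig_multiset_blocks hM hP hQ hME
  have : ∀ {α : Type} [Fintype α] (f : α → ℝ),
      ∑ i, g (f i) = ((Finset.univ.val.map f).map g).sum := by
    intro α _ f
    rw [Multiset.map_map]
    rfl
  rw [this, this, this, key, Multiset.map_add, Multiset.sum_add]

lemma my_sum_eig_eq_trace {m : Type*} [Fintype m] [DecidableEq m] {M : Matrix m m ℂ}
    (hM : M.IsHermitian) :
    ((∑ i, hM.eigenvalues i : ℝ) : ℂ) = M.trace := by
  have := hM.spectral_theorem
  rw [Unitary.conjStarAlgAut_apply] at this
  conv_rhs => rw [this]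
  rw [Matrix.trace_mul_cycle,
    mul_eq_one_comm.mp (Matrix.mem_unitaryGroup_iff.mp hM.eigenvectorUnitary.2), one_mul,
    Matrix.trace_diagonal]
  push_cast
  rfl

lemma my_eig_le {m : Type*} [Fintype m] [DecidableEq m] (N : Matrix m m ℂ) (i : m) :
    (Matrix.isHermitian_conjTranspose_mul_self N).eigenvalues i
      ≤ ∑ j, ∑ k, Complex.normSq (N j k) := by
  have hnn : ∀ j, 0 ≤ (Matrix.isHermitian_conjTranspose_mul_self N).eigenvalues j :=
    fun j => Matrix.eigenvalues_conjTranspose_mul_self_nonneg N j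
  have htr : (Nᴴ * N).trace = ((∑ j, ∑ k, Complex.normSq (N j k) : ℝ) : ℂ) := by
    rw [Matrix.trace]
    push_cast
    rw [Finset.sum_comm]
    congr 1
    ext j
    rw [Matrix.diag_apply, Matrix.mul_apply]
    congr 1
    ext k
    rw [Matrix.conjTranspose_apply, Complex.star_def, ← Complex.normSq_eq_conj_mul_self]
  have hsum : ∑ j, (Matrix.isHermitian_conjTranspose_mul_self N).eigenvalues j
      = ∑ j, ∑ k, Complex.normSq (N j k) := by
    have := my_sum_eig_eq_trace (Matrix.isHermitian_conjTranspose_mul_self N)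
    rw [htr] at this
    exact_mod_cast this
  calc (Matrix.isHermitian_conjTranspose_mul_self N).eigenvalues i
      ≤ ∑ j, (Matrix.isHermitian_conjTranspose_mul_self N).eigenvalues j :=
        Finset.single_le_sum (fun j _ => hnn j) (Finset.mem_univ i)
    _ = _ := hsum

lemma my_schattenNorm_le {m : Type*} [Fintype m] [DecidableEq m] {p : ℝ} (hp : 1 ≤ p)
    (N : Matrix m m ℂ) {t : ℝ} (ht : ∑ j, ∑ k, Complex.normSq (N j k) ≤ t) :
    schattenNorm p N ≤ ((Fintype.card m : ℝ) * Real.sqrt t ^ p) ^ (1 / p) := by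
  have hp0 : (0:ℝ) ≤ p := le_trans zero_le_one hp
  unfold schattenNorm
  apply Real.rpow_le_rpow
  · exact Finset.sum_nonneg fun i _ => Real.rpow_nonneg (Real.sqrt_nonneg _) _
  · calc ∑ i, Real.sqrt ((Matrix.isHermitian_conjTranspose_mul_self N).eigenvalues i) ^ p
        ≤ ∑ _i : m, Real.sqrt t ^ p := by
          apply Finset.sum_le_sum
          intro i _
          exact Real.rpow_le_rpow (Real.sqrt_nonneg _)
            (Real.sqrt_le_sqrt (le_trans (my_eig_le N i) ht)) hp0
      _ = (Fintype.card m : ℝ) * Real.sqrt t ^ p := by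
          rw [Finset.sum_const, nsmul_eq_mul, Finset.card_univ]
  · positivity

lemma my_bddAbove {m : Type*} [Fintype m] [DecidableEq m] {p : ℝ} (hp : 1 ≤ p)
    (A : Matrix m m ℂ) :
    BddAbove (Set.range fun θ : ℝ => schattenNorm p (reM (Complex.exp (θ * Complex.I) • A))) := by
  refine ⟨((Fintype.card m : ℝ) * Real.sqrt
      (∑ j, ∑ k, (2⁻¹ * (‖A j k‖ + ‖A k j‖))^2) ^ p) ^ (1 / p), ?_⟩
  rintro x ⟨θ, rfl⟩
  apply my_schattenNorm_le hp
  apply Finset.sum_le_sum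
  intro j _
  apply Finset.sum_le_sum
  intro k _
  have habs : ‖reM (Complex.exp (θ * Complex.I) • A) j k‖
      ≤ 2⁻¹ * (‖A j k‖ + ‖A k j‖) := by
    have hjk : reM (Complex.exp (θ * Complex.I) • A) j k
        = 2⁻¹ * (Complex.exp (θ * Complex.I) * A j k
            + star (Complex.exp (θ * Complex.I) * A k j)) := by
      simp [reM, Matrix.smul_apply, Matrix.add_apply, Matrix.conjTranspose_apply]
    rw [hjk, norm_mul]
    have h2 : ‖(2⁻¹ : ℂ)‖ = 2⁻¹ := by
      rw [norm_inv]; simp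
    rw [h2]
    apply mul_le_mul_of_nonneg_left _ (by norm_num)
    calc ‖Complex.exp (θ * Complex.I) * A j k
            + star (Complex.exp (θ * Complex.I) * A k j)‖
        ≤ ‖Complex.exp (θ * Complex.I) * A j k‖
            + ‖star (Complex.exp (θ * Complex.I) * A k j)‖ := norm_add_le _ _
      _ = ‖A j k‖ + ‖A k j‖ := by
          rw [Complex.star_def, Complex.norm_conj, norm_mul, norm_mul,
            Complex.norm_exp_ofReal_mul_I, one_mul, one_mul]
  calc Complex.normSq (reM (Complex.exp (θ * Complex.I) • A) j k)
      = ‖reM (Complex.exp (θ * Complex.I) • A) j k‖ ^ 2 := (Complex.sq_norm _).symm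
    _ ≤ (2⁻¹ * (‖A j k‖ + ‖A k j‖)) ^ 2 :=
        pow_le_pow_left₀ (norm_nonneg _) habs 2

lemma my_schattenNorm_nonneg {m : Type*} [Fintype m] [DecidableEq m] (p : ℝ)
    (A : Matrix m m ℂ) : 0 ≤ schattenNorm p A := by
  unfold schattenNorm; exact Real.rpow_nonneg
    (Finset.sum_nonneg fun i _ => Real.rpow_nonneg (Real.sqrt_nonneg _) _) _

lemma my_schatten_rpow {m : Type*} [Fintype m] [DecidableEq m] {p : ℝ} (hp : 1 ≤ p)
    (A : Matrix m m ℂ) :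
    schattenNorm p A ^ p
      = ∑ i, Real.sqrt ((Matrix.isHermitian_conjTranspose_mul_self A).eigenvalues i) ^ p := by
  have hp0 : p ≠ 0 := (lt_of_lt_of_le zero_lt_one hp).ne'
  have hnn : (0:ℝ) ≤ ∑ i, Real.sqrt ((Matrix.isHermitian_conjTranspose_mul_self A).eigenvalues i) ^ p :=
    Finset.sum_nonneg fun i _ => Real.rpow_nonneg (Real.sqrt_nonneg _) _
  rw [schattenNorm, ← Real.rpow_mul hnn, one_div_mul_cancel hp0, Real.rpow_one]

lemma my_schatten_blocks {k : ℕ} {p : ℝ} (hp : 1 ≤ p) (P Q : Matrix (Fin k) (Fin k) ℂ) :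
    schattenNorm p (Matrix.fromBlocks P 0 0 Q)
      = (schattenNorm p P ^ p + schattenNorm p Q ^ p) ^ (1 / p) := by
  have hME : (Matrix.fromBlocks P 0 0 Q)ᴴ * (Matrix.fromBlocks P 0 0 Q)
      = Matrix.fromBlocks (Pᴴ * P) 0 0 (Qᴴ * Q) := by
    simp [Matrix.fromBlocks_conjTranspose, Matrix.fromBlocks_multiply]
  have hsum : (∑ i, Real.sqrt ((Matrix.isHermitian_conjTranspose_mul_self
          (Matrix.fromBlocks P 0 0 Q)).eigenvalues i) ^ p)
      = (∑ i, Real.sqrt ((Matrix.isHermitian_conjTranspose_mul_self P).eigenvalues i) ^ p)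
        + (∑ i, Real.sqrt ((Matrix.isHermitian_conjTranspose_mul_self Q).eigenvalues i) ^ p) := by
    simpa using my_eig_sum_blocks (Matrix.isHermitian_conjTranspose_mul_self _)
      (Matrix.isHermitian_conjTranspose_mul_self P) (Matrix.isHermitian_conjTranspose_mul_self Q)
      hME (fun r => Real.sqrt r ^ p)
  rw [schattenNorm, hsum, my_schatten_rpow hp, my_schatten_rpow hp]

theorem stmt_6 {n : ℕ} (p : ℝ) (hp : 1 ≤ p) (A B : Matrix (Fin n) (Fin n) ℂ) :
    wp p (Matrix.fromBlocks A 0 0 B) ≤ (wp p A ^ p + wp p B ^ p) ^ (1 / p) := by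
  have hp0 : (0:ℝ) ≤ p := le_trans zero_le_one hp
  apply ciSup_le
  intro θ
  have hre : reM (Complex.exp (θ * Complex.I) • Matrix.fromBlocks A 0 0 B)
      = Matrix.fromBlocks (reM (Complex.exp (θ * Complex.I) • A)) 0 0
          (reM (Complex.exp (θ * Complex.I) • B)) := by
    simp [reM, Matrix.fromBlocks_smul, Matrix.fromBlocks_conjTranspose,
      Matrix.fromBlocks_add, Matrix.conjTranspose_smul, smul_smul, smul_add]
  rw [hre, my_schatten_blocks hp]
  apply Real.rpow_le_rpow
  · exact add_nonneg (Real.rpow_nonneg (my_schattenNorm_nonneg _ _) _)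
      (Real.rpow_nonneg (my_schattenNorm_nonneg _ _) _)
  · apply add_le_add
    · exact Real.rpow_le_rpow (my_schattenNorm_nonneg _ _)
        (le_ciSup (my_bddAbove hp A) θ) hp0
    · exact Real.rpow_le_rpow (my_schattenNorm_nonneg _ _)
        (le_ciSup (my_bddAbove hp B) θ) hp0
  · positivity
end

section
/- Let A = [A_{ij}] (1 ≤ i,j ≤ 2) be a 2×2 block matrix with n×n blocks and 1 ≤ p ≤ 2. Then ω_p(A)^p ≤ ω_p(A_{11})^p + ω_p(A_{22})^p + 2 · (2^{-1/p} ω_p([[0, A_{12}],[A_{21}, 0]]))^p. -/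
open Matrix Complex

open Polynomial ComplexOrder

noncomputable section
namespace AuxW

variable {m : Type*} [Fintype m] [DecidableEq m]

lemma charpoly_conj_aux {S S' A : Matrix m m ℂ} (h : S * S' = 1) (_h' : S' * S = 1) :
    (S * A * S').charpoly = A.charpoly := by
  have hscal : ∀ B : Matrix m m ℂ,
      B.map Polynomial.C * Matrix.scalar m (X : ℂ[X])
        = Matrix.scalar m (X : ℂ[X]) * B.map Polynomial.C :=
    fun B => ((Matrix.scalar_commute (X : ℂ[X]) (fun r => Commute.all _ r)
      (B.map Polynomial.C))).symm
  have hmap : ∀ (P Q : Matrix m m ℂ),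
      (P * Q).map Polynomial.C = P.map Polynomial.C * Q.map Polynomial.C := by
    intro P Q
    exact Matrix.map_mul
  have h1 : S.map Polynomial.C * S'.map Polynomial.C = 1 := by
    rw [← hmap, h]
    exact Matrix.map_one _ (map_zero _) (map_one _)
  have hc : S.map Polynomial.C * charmatrix A * S'.map Polynomial.C
      = charmatrix (S * A * S') := by
    unfold charmatrix
    simp only [RingHom.mapMatrix_apply]
    rw [mul_sub, sub_mul]
    congr 1
    · rw [hscal S, mul_assoc, h1, mul_one]
    · rw [hmap, hmap]
  rw [Matrix.charpoly, ← hc, det_mul, det_mul, Matrix.charpoly]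
  have h2 : (S.map Polynomial.C).det * (S'.map Polynomial.C).det = 1 := by
    rw [← det_mul, h1, det_one]
  calc (S.map Polynomial.C).det * (charmatrix A).det * (S'.map Polynomial.C).det
      = (charmatrix A).det * ((S.map Polynomial.C).det * (S'.map Polynomial.C).det) := by ring
    _ = (charmatrix A).det := by rw [h2, mul_one]

lemma charpoly_diagonal_c (d : m → ℂ) :
    (Matrix.diagonal d).charpoly = ∏ i, (X - Polynomial.C (d i)) := by
  rw [Matrix.charpoly]
  have : charmatrix (Matrix.diagonal d) = Matrix.diagonal (fun i => X - Polynomial.C (d i)) := by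
    ext i j
    by_cases hij : i = j
    · subst hij; simp
    · simp [charmatrix_apply_ne _ _ _ hij, Matrix.diagonal_apply_ne _ hij,
        Matrix.diagonal_apply_ne' _ hij]
  rw [this, det_diagonal]

def evs {A : Matrix m m ℂ} (hA : A.IsHermitian) : Multiset ℝ :=
  Finset.univ.val.map hA.eigenvalues

lemma charpoly_eq_prod {A : Matrix m m ℂ} (hA : A.IsHermitian) :
    A.charpoly = ((evs hA).map (fun x : ℝ => X - Polynomial.C (x : ℂ))).prod := by
  have hU1 : (hA.eigenvectorUnitary : Matrix m m ℂ) * star (hA.eigenvectorUnitary : Matrix m m ℂ)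
      = 1 := Matrix.mem_unitaryGroup_iff.mp hA.eigenvectorUnitary.2
  have hU2 : star (hA.eigenvectorUnitary : Matrix m m ℂ) * (hA.eigenvectorUnitary : Matrix m m ℂ)
      = 1 := Matrix.mem_unitaryGroup_iff'.mp hA.eigenvectorUnitary.2
  conv_lhs => rw [hA.spectral_theorem, Unitary.conjStarAlgAut_apply]
  rw [charpoly_conj_aux hU1 hU2, charpoly_diagonal_c, evs, Multiset.map_map,
    Finset.prod_eq_multiset_prod]
  rfl

lemma evs_map_coe {A : Matrix m m ℂ} (hA : A.IsHermitian) :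
    (evs hA).map (fun x : ℝ => (x : ℂ)) = A.charpoly.roots := by
  rw [charpoly_eq_prod hA]
  have h2 : Multiset.map (fun x : ℝ => X - Polynomial.C (x : ℂ)) (evs hA)
      = Multiset.map (fun z : ℂ => X - Polynomial.C z) ((evs hA).map (fun x : ℝ => (x : ℂ))) := by
    rw [Multiset.map_map]; rfl
  rw [h2, Polynomial.roots_multiset_prod_X_sub_C]

lemma evs_congr_charpoly {k : Type*} [Fintype k] [DecidableEq k]
    {A : Matrix m m ℂ} {B : Matrix k k ℂ} (hA : A.IsHermitian) (hB : B.IsHermitian)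
    (h : A.charpoly = B.charpoly) : evs hA = evs hB := by
  apply Multiset.map_injective Complex.ofReal_injective
  rw [evs_map_coe hA, evs_map_coe hB]
  exact congrArg _ h

lemma evs_congr {A B : Matrix m m ℂ} (h : A = B) (hA : A.IsHermitian) (hB : B.IsHermitian) :
    evs hA = evs hB := by subst h; rfl

lemma evs_fromBlocks {k l : Type*} [Fintype k] [DecidableEq k] [Fintype l] [DecidableEq l]
    {X : Matrix k k ℂ} {Y : Matrix l l ℂ} (hX : X.IsHermitian) (hY : Y.IsHermitian)
    (hXY : (Matrix.fromBlocks X 0 0 Y).IsHermitian) :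
    evs hXY = evs hX + evs hY := by
  apply Multiset.map_injective Complex.ofReal_injective
  rw [Multiset.map_add, evs_map_coe, evs_map_coe, evs_map_coe,
    Matrix.charpoly_fromBlocks_zero₂₁,
    Polynomial.roots_mul (mul_ne_zero (Matrix.charpoly_monic X).ne_zero
      (Matrix.charpoly_monic Y).ne_zero)]

def trp (q : ℝ) {A : Matrix m m ℂ} (hA : A.IsHermitian) : ℝ :=
  ∑ i, hA.eigenvalues i ^ q

lemma trp_eq_multiset (q : ℝ) {A : Matrix m m ℂ} (hA : A.IsHermitian) :
    trp q hA = ((evs hA).map (fun x : ℝ => x ^ q)).sum := by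
  rw [trp, evs, Multiset.map_map, Finset.sum]
  rfl

lemma trp_congr_charpoly {k : Type*} [Fintype k] [DecidableEq k] (q : ℝ)
    {A : Matrix m m ℂ} {B : Matrix k k ℂ} (hA : A.IsHermitian) (hB : B.IsHermitian)
    (h : A.charpoly = B.charpoly) : trp q hA = trp q hB := by
  rw [trp_eq_multiset, trp_eq_multiset, evs_congr_charpoly hA hB h]

lemma trp_congr {A B : Matrix m m ℂ} (h : A = B) (q : ℝ)
    (hA : A.IsHermitian) (hB : B.IsHermitian) : trp q hA = trp q hB := by
  subst h; rfl

lemma trp_fromBlocks {k l : Type*} [Fintype k] [DecidableEq k] [Fintype l] [DecidableEq l] (q : ℝ)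
    {X : Matrix k k ℂ} {Y : Matrix l l ℂ} (hX : X.IsHermitian) (hY : Y.IsHermitian)
    (hXY : (Matrix.fromBlocks X 0 0 Y).IsHermitian) :
    trp q hXY = trp q hX + trp q hY := by
  rw [trp_eq_multiset, trp_eq_multiset, trp_eq_multiset, evs_fromBlocks hX hY hXY,
    Multiset.map_add, Multiset.sum_add]

lemma eigenvalues_zero_matrix (h0 : (0 : Matrix m m ℂ).IsHermitian) (i : m) :
    h0.eigenvalues i = 0 := by
  rw [Matrix.IsHermitian.eigenvalues_eq]
  simp

lemma trp_zero_matrix (q : ℝ) (hq : q ≠ 0) (h0 : (0 : Matrix m m ℂ).IsHermitian) :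
    trp q h0 = 0 := by
  rw [trp]
  refine Finset.sum_eq_zero fun i _ => ?_
  rw [eigenvalues_zero_matrix h0 i, Real.zero_rpow hq]

lemma trp_nonneg (q : ℝ) {A : Matrix m m ℂ} (hA : A.PosSemidef) : 0 ≤ trp q hA.1 :=
  Finset.sum_nonneg fun i _ => Real.rpow_nonneg (hA.eigenvalues_nonneg i) q

lemma diag_re_nonneg {A : Matrix m m ℂ} (hA : A.PosSemidef) (i : m) : 0 ≤ (A i i).re := by
  have h := hA.re_dotProduct_nonneg (Pi.single i 1)
  have he : dotProduct (star (Pi.single i 1 : m → ℂ)) (A *ᵥ Pi.single i 1) = A i i := by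
    simp [dotProduct, Pi.single_apply, mulVec, Finset.sum_ite_eq, apply_ite (star : ℂ → ℂ)]
  rwa [he] at h

lemma re_entry_conj_sum (W : Matrix m m ℂ) (c : m → ℝ) (i : m) :
    ((W * Matrix.diagonal (fun j => (c j : ℂ)) * Wᴴ) i i).re
      = ∑ j, Complex.normSq (W i j) * c j := by
  rw [Matrix.mul_apply]
  rw [Complex.re_sum]
  refine Finset.sum_congr rfl fun j _ => ?_
  rw [Matrix.mul_diagonal, Matrix.conjTranspose_apply]
  have : W i j * (c j : ℂ) * star (W i j) = ((Complex.normSq (W i j) * c j : ℝ) : ℂ) := by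
    push_cast
    rw [show (W i j * (c j : ℂ) * star (W i j)) = (W i j * star (W i j)) * (c j : ℂ) by ring]
    rw [Complex.star_def, Complex.mul_conj]
  rw [this, Complex.ofReal_re]

lemma re_diag_one_sum_row (W : Matrix m m ℂ) (h : W * Wᴴ = 1) (i : m) :
    ∑ j, Complex.normSq (W i j) = 1 := by
  have := congrArg (fun M => (M i i).re) h
  simp only [Matrix.one_apply_eq, Complex.one_re] at this
  rw [← this, Matrix.mul_apply, Complex.re_sum]
  refine Finset.sum_congr rfl fun j _ => ?_
  rw [Matrix.conjTranspose_apply, Complex.star_def, Complex.mul_conj, Complex.ofReal_re]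

lemma re_diag_one_sum_col (W : Matrix m m ℂ) (h : Wᴴ * W = 1) (j : m) :
    ∑ i, Complex.normSq (W i j) = 1 := by
  have := congrArg (fun M => (M j j).re) h
  simp only [Matrix.one_apply_eq, Complex.one_re] at this
  rw [← this, Matrix.mul_apply, Complex.re_sum]
  refine Finset.sum_congr rfl fun i _ => ?_
  rw [Matrix.conjTranspose_apply, Complex.star_def, mul_comm, Complex.mul_conj,
    Complex.ofReal_re]

lemma peierls {A : Matrix m m ℂ} (hA : A.PosSemidef) {q : ℝ} (hq0 : 0 < q) (hq1 : q ≤ 1)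
    {V : Matrix m m ℂ} (h1 : V * Vᴴ = 1) (h2 : Vᴴ * V = 1) :
    ∑ i, hA.1.eigenvalues i ^ q ≤ ∑ i, ((Vᴴ * A * V) i i).re ^ q := by
  set U := (hA.1.eigenvectorUnitary : Matrix m m ℂ) with hU
  have hU1 : U * Uᴴ = 1 := by
    rw [← Matrix.star_eq_conjTranspose]
    exact Matrix.mem_unitaryGroup_iff.mp hA.1.eigenvectorUnitary.2
  have hU2 : Uᴴ * U = 1 := by
    rw [← Matrix.star_eq_conjTranspose]
    exact Matrix.mem_unitaryGroup_iff'.mp hA.1.eigenvectorUnitary.2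
  set W := Vᴴ * U with hW
  have hW1 : W * Wᴴ = 1 := by
    rw [hW, Matrix.conjTranspose_mul, Matrix.conjTranspose_conjTranspose, Matrix.mul_assoc,
      ← Matrix.mul_assoc U, hU1, Matrix.one_mul, h2]
  have hW2 : Wᴴ * W = 1 := by
    rw [hW, Matrix.conjTranspose_mul, Matrix.conjTranspose_conjTranspose, Matrix.mul_assoc,
      ← Matrix.mul_assoc V, h1, Matrix.one_mul, hU2]
  have hVAV : Vᴴ * A * V = W * Matrix.diagonal (fun j => ((hA.1.eigenvalues j : ℝ) : ℂ)) * Wᴴ := by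
    conv_lhs => rw [hA.1.spectral_theorem, Unitary.conjStarAlgAut_apply]
    rw [Matrix.star_eq_conjTranspose, hW, Matrix.conjTranspose_mul,
      Matrix.conjTranspose_conjTranspose]
    have : Matrix.diagonal (RCLike.ofReal ∘ hA.1.eigenvalues)
        = Matrix.diagonal (fun j => ((hA.1.eigenvalues j : ℝ) : ℂ)) := rfl
    rw [← hU, this]
    noncomm_ring
  have hd : ∀ i, ((Vᴴ * A * V) i i).re = ∑ j, Complex.normSq (W i j) * hA.1.eigenvalues j := by
    intro i
    rw [hVAV]
    exact re_entry_conj_sum W _ i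
  have hconc : ConcaveOn ℝ (Set.Ici 0) (fun x : ℝ => x ^ q) := Real.concaveOn_rpow hq0.le hq1
  calc ∑ j, hA.1.eigenvalues j ^ q
      = ∑ j, (∑ i, Complex.normSq (W i j)) * hA.1.eigenvalues j ^ q := by
        refine Finset.sum_congr rfl fun j _ => ?_
        rw [re_diag_one_sum_col W hW2, one_mul]
    _ = ∑ i, ∑ j, Complex.normSq (W i j) * hA.1.eigenvalues j ^ q := by
        rw [Finset.sum_comm]
        refine Finset.sum_congr rfl fun j _ => ?_
        rw [Finset.sum_mul]
    _ ≤ ∑ i, ((Vᴴ * A * V) i i).re ^ q := by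
        refine Finset.sum_le_sum fun i _ => ?_
        rw [hd i]
        have := hconc.le_map_sum (t := Finset.univ)
          (w := fun j => Complex.normSq (W i j)) (p := fun j => hA.1.eigenvalues j)
          (fun j _ => Complex.normSq_nonneg _) (re_diag_one_sum_row W hW1 i)
          (fun j _ => hA.eigenvalues_nonneg j)
        simpa [smul_eq_mul] using this

lemma core {P Q G : Matrix m m ℂ} (hP : P.PosSemidef) (hQ : Q.PosSemidef) (hG : G.IsHermitian)
    (hsum : P + Q = (2 : ℂ) • G) {q : ℝ} (hq0 : 0 < q) (hq1 : q ≤ 1) :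
    trp q hP.1 + trp q hQ.1 ≤ 2 * trp q hG := by
  set V := (hG.eigenvectorUnitary : Matrix m m ℂ) with hV
  have hV1 : V * Vᴴ = 1 := by
    rw [← Matrix.star_eq_conjTranspose]
    exact Matrix.mem_unitaryGroup_iff.mp hG.eigenvectorUnitary.2
  have hV2 : Vᴴ * V = 1 := by
    rw [← Matrix.star_eq_conjTranspose]
    exact Matrix.mem_unitaryGroup_iff'.mp hG.eigenvectorUnitary.2
  have hdiagG : ∀ i, ((Vᴴ * G * V) i i).re = hG.eigenvalues i := by
    intro i
    have := hG.conjStarAlgAut_star_eigenvectorUnitary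
    rw [Unitary.conjStarAlgAut_star_apply] at this
    rw [Matrix.star_eq_conjTranspose] at this
    rw [← hV] at this
    rw [this, Matrix.diagonal_apply_eq]
    exact Complex.ofReal_re _
  set dP : m → ℝ := fun i => ((Vᴴ * P * V) i i).re with hdP
  set dQ : m → ℝ := fun i => ((Vᴴ * Q * V) i i).re with hdQ
  have hsplit : ∀ i, dP i + dQ i = 2 * hG.eigenvalues i := by
    intro i
    have h1 : Vᴴ * (P + Q) * V = Vᴴ * P * V + Vᴴ * Q * V := by noncomm_ring
    have h2 : Vᴴ * ((2 : ℂ) • G) * V = (2 : ℂ) • (Vᴴ * G * V) := by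
      rw [Matrix.mul_smul, Matrix.smul_mul]
    have := congrArg (fun M => (M i i).re) (h1.symm.trans (by rw [hsum, h2]))
    simp only [Matrix.add_apply, Complex.add_re, Matrix.smul_apply, smul_eq_mul,
      Complex.mul_re] at this
    rw [hdP, hdQ]
    rw [← hdiagG i]
    norm_num at this ⊢
    linarith [this]
  have hdPn : ∀ i, 0 ≤ dP i := fun i => diag_re_nonneg (hP.conjTranspose_mul_mul_same V) i
  have hdQn : ∀ i, 0 ≤ dQ i := fun i => diag_re_nonneg (hQ.conjTranspose_mul_mul_same V) i
  have hconc : ConcaveOn ℝ (Set.Ici 0) (fun x : ℝ => x ^ q) := Real.concaveOn_rpow hq0.le hq1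
  have hstep : ∀ i, dP i ^ q + dQ i ^ q ≤ 2 * hG.eigenvalues i ^ q := by
    intro i
    have := hconc.2 (Set.mem_Ici.mpr (hdPn i)) (Set.mem_Ici.mpr (hdQn i))
      (by norm_num : (0:ℝ) ≤ 2⁻¹) (by norm_num : (0:ℝ) ≤ 2⁻¹) (by norm_num)
    have harg : (2⁻¹ : ℝ) • dP i + (2⁻¹ : ℝ) • dQ i = hG.eigenvalues i := by
      have := hsplit i
      simp only [smul_eq_mul]
      linarith
    rw [harg] at this
    simp only [smul_eq_mul] at this
    linarith
  calc trp q hP.1 + trp q hQ.1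
      ≤ (∑ i, dP i ^ q) + ∑ i, dQ i ^ q := by
        refine add_le_add ?_ ?_
        · exact peierls hP hq0 hq1 hV1 hV2
        · exact peierls hQ hq0 hq1 hV1 hV2
    _ = ∑ i, (dP i ^ q + dQ i ^ q) := by rw [Finset.sum_add_distrib]
    _ ≤ ∑ i, 2 * hG.eigenvalues i ^ q := Finset.sum_le_sum fun i _ => hstep i
    _ = 2 * trp q hG := by rw [trp, Finset.mul_sum]


lemma charpoly_mul_comm_c (A B : Matrix m m ℂ) : (A * B).charpoly = (B * A).charpoly := by
  have hS : (Matrix.fromBlocks 1 A 0 1 : Matrix (m ⊕ m) (m ⊕ m) ℂ)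
      * Matrix.fromBlocks 1 (-A) 0 1 = 1 := by
    rw [Matrix.fromBlocks_multiply]
    simp [← Matrix.fromBlocks_one]
  have hS' : (Matrix.fromBlocks 1 (-A) 0 1 : Matrix (m ⊕ m) (m ⊕ m) ℂ)
      * Matrix.fromBlocks 1 A 0 1 = 1 := by
    rw [Matrix.fromBlocks_multiply]
    simp [← Matrix.fromBlocks_one]
  have hM : (Matrix.fromBlocks 1 A 0 1 : Matrix (m ⊕ m) (m ⊕ m) ℂ)
      * (Matrix.fromBlocks 0 0 B (B * A)) * Matrix.fromBlocks 1 (-A) 0 1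
      = Matrix.fromBlocks (A * B) 0 B 0 := by
    rw [Matrix.fromBlocks_multiply, Matrix.fromBlocks_multiply]
    simp [Matrix.mul_assoc]
  have h1 := charpoly_conj_aux (A := (Matrix.fromBlocks 0 0 B (B * A) : Matrix (m ⊕ m) (m ⊕ m) ℂ))
    hS hS'
  rw [hM] at h1
  rw [Matrix.charpoly_fromBlocks_zero₁₂, Matrix.charpoly_fromBlocks_zero₁₂] at h1
  have h0 : (0 : Matrix m m ℂ).charpoly ≠ 0 := (Matrix.charpoly_monic _).ne_zero
  have h2 : (0 : Matrix m m ℂ).charpoly * (A * B).charpoly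
      = (0 : Matrix m m ℂ).charpoly * (B * A).charpoly := by
    rw [mul_comm] at h1
    rw [h1]
  exact mul_left_cancel₀ h0 h2

lemma isHermitian_fromBlocks_aux {k : Type*} [Fintype k] [DecidableEq k]
    {B E : Matrix k k ℂ} (hB : B.IsHermitian) (hE : E.IsHermitian) (C : Matrix k k ℂ) :
    (Matrix.fromBlocks B C Cᴴ E).IsHermitian := by
  have : (Matrix.fromBlocks B C Cᴴ E)ᴴ = Matrix.fromBlocks Bᴴ (Cᴴ)ᴴ Cᴴ Eᴴ :=
    Matrix.fromBlocks_conjTranspose B C Cᴴ E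
  unfold Matrix.IsHermitian
  rw [this, Matrix.conjTranspose_conjTranspose, hB.eq, hE.eq]

lemma sign_conj_aux {k : Type*} [Fintype k] [DecidableEq k] (a b c d : Matrix k k ℂ) :
    (Matrix.fromBlocks 1 0 0 (-1) : Matrix (k ⊕ k) (k ⊕ k) ℂ) * Matrix.fromBlocks a b c d
      * Matrix.fromBlocks 1 0 0 (-1) = Matrix.fromBlocks a (-b) (-c) d := by
  rw [Matrix.fromBlocks_multiply, Matrix.fromBlocks_multiply]
  simp



lemma trp_add_le {X Y : Matrix m m ℂ} (hX : X.PosSemidef) (hY : Y.PosSemidef)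
    {q : ℝ} (hq0 : 0 < q) (hq1 : q ≤ 1) (hXY : (X + Y).IsHermitian) :
    trp q hXY ≤ trp q hX.1 + trp q hY.1 := by
  obtain ⟨SX, hSXsa, -, hSXX⟩ := open scoped MatrixOrder in
    CFC.exists_sqrt_of_isSelfAdjoint_of_quasispectrumRestricts hX.isHermitian
      (QuasispectrumRestricts.nnreal_of_nonneg hX.nonneg)
  obtain ⟨SY, hSYsa, -, hSYY⟩ := open scoped MatrixOrder in
    CFC.exists_sqrt_of_isSelfAdjoint_of_quasispectrumRestricts hY.isHermitian
      (QuasispectrumRestricts.nnreal_of_nonneg hY.nonneg)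
  have hsX : SXᴴ = SX := hSXsa
  have hsY : SYᴴ = SY := hSYsa
  set R : Matrix (m ⊕ m) (m ⊕ m) ℂ := Matrix.fromBlocks SX SY 0 0 with hR
  have hRH : Rᴴ = Matrix.fromBlocks SX 0 SY 0 := by
    rw [hR, Matrix.fromBlocks_conjTranspose, hsX, hsY]
    simp
  have hP1 : R * Rᴴ = Matrix.fromBlocks (X + Y) 0 0 0 := by
    rw [hRH, hR, Matrix.fromBlocks_multiply]
    simp [hSXX, hSYY]
  have hP2 : Rᴴ * R = Matrix.fromBlocks X (SX * SY) (SY * SX) Y := by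
    rw [hRH, hR, Matrix.fromBlocks_multiply]
    simp [hSXX, hSYY]
  have hP2psd : (Rᴴ * R).PosSemidef := Matrix.posSemidef_conjTranspose_mul_self R
  have hP1psd : (R * Rᴴ).PosSemidef := Matrix.posSemidef_self_mul_conjTranspose R
  set V : Matrix (m ⊕ m) (m ⊕ m) ℂ := Matrix.fromBlocks 1 0 0 (-1) with hV
  have hVH : Vᴴ = V := by
    rw [hV, Matrix.fromBlocks_conjTranspose]; simp
  have hVV : V * V = 1 := by
    rw [hV, Matrix.fromBlocks_multiply]; simp [← Matrix.fromBlocks_one]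
  have hQpsd : (V * (Rᴴ * R) * Vᴴ).PosSemidef := hP2psd.mul_mul_conjTranspose_same V
  have hQform : V * (Rᴴ * R) * Vᴴ
      = Matrix.fromBlocks X (-(SX * SY)) (-(SY * SX)) Y := by
    rw [hVH, hP2, hV, sign_conj_aux]
  have hNh : (Matrix.fromBlocks X 0 0 Y : Matrix (m ⊕ m) (m ⊕ m) ℂ).IsHermitian := by
    have := isHermitian_fromBlocks_aux hX.1 hY.1 (0 : Matrix m m ℂ)
    simpa using this
  have hsum : (Rᴴ * R) + (V * (Rᴴ * R) * Vᴴ)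
      = (2 : ℂ) • (Matrix.fromBlocks X 0 0 Y : Matrix (m ⊕ m) (m ⊕ m) ℂ) := by
    rw [hQform, hP2, Matrix.fromBlocks_add, Matrix.fromBlocks_smul, Matrix.fromBlocks_inj]
    refine ⟨(two_smul ℂ X).symm, by simp, by simp, (two_smul ℂ Y).symm⟩
  have hcore := core hP2psd hQpsd hNh hsum hq0 hq1
  have hQP : trp q hQpsd.1 = trp q hP2psd.1 :=
    trp_congr_charpoly q _ _ (by rw [hVH]; exact charpoly_conj_aux hVV hVV)
  have hPP : trp q hP2psd.1 = trp q hP1psd.1 :=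
    trp_congr_charpoly q _ _ (charpoly_mul_comm_c Rᴴ R)
  have h0h : (0 : Matrix m m ℂ).IsHermitian := Matrix.isHermitian_zero
  have hfb : (Matrix.fromBlocks (X + Y) 0 0 (0 : Matrix m m ℂ)).IsHermitian := hP1 ▸ hP1psd.1
  have hblk : trp q hP1psd.1 = trp q hXY + trp q h0h := by
    rw [trp_congr hP1 q hP1psd.1 hfb]
    exact trp_fromBlocks q hXY h0h hfb
  have hNblk : trp q hNh = trp q hX.1 + trp q hY.1 := trp_fromBlocks q hX.1 hY.1 hNh
  rw [trp_zero_matrix q hq0.ne' h0h] at hblk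
  linarith


lemma eig_congr {A B : Matrix m m ℂ} (h : A = B) (hA : A.IsHermitian) (hB : B.IsHermitian) :
    hA.eigenvalues = hB.eigenvalues := by subst h; rfl

lemma isHermitian_sq {A : Matrix m m ℂ} (hA : A.IsHermitian) : (A * A).IsHermitian := by
  show (A * A)ᴴ = A * A
  rw [Matrix.conjTranspose_mul, hA.eq]

lemma posSemidef_sq {A : Matrix m m ℂ} (hA : A.IsHermitian) : (A * A).PosSemidef := by
  have := Matrix.posSemidef_conjTranspose_mul_self A
  rwa [hA.eq] at this

lemma schatten_rpow_eq (p : ℝ) (hp : 1 ≤ p) {A : Matrix m m ℂ} (hA : A.IsHermitian) :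
    schattenNorm p A ^ p = trp (p / 2) (isHermitian_sq hA) := by
  have hp0 : (0 : ℝ) < p := lt_of_lt_of_le one_pos hp
  have hAA' : Aᴴ * A = A * A := by rw [hA.eq]
  have he : (Matrix.isHermitian_conjTranspose_mul_self A).eigenvalues
      = (isHermitian_sq hA).eigenvalues :=
    eig_congr hAA' _ _
  have hev : ∀ i, 0 ≤ (isHermitian_sq hA).eigenvalues i := (posSemidef_sq hA).eigenvalues_nonneg
  unfold schattenNorm
  rw [he]
  have hterm : ∀ i : m, Real.sqrt ((isHermitian_sq hA).eigenvalues i) ^ p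
      = (isHermitian_sq hA).eigenvalues i ^ (p / 2) := by
    intro i
    rw [Real.sqrt_eq_rpow, ← Real.rpow_mul (hev i), show (1 / 2 : ℝ) * p = p / 2 by ring]
  simp only [hterm]
  rw [← Real.rpow_mul (Finset.sum_nonneg fun i _ => Real.rpow_nonneg (hev i) _)]
  rw [one_div_mul_cancel hp0.ne', Real.rpow_one, trp]

lemma key_schatten {p : ℝ} (hp1 : 1 ≤ p) (hp2 : p ≤ 2)
    {B E : Matrix m m ℂ} (hB : B.IsHermitian) (hE : E.IsHermitian) (C : Matrix m m ℂ) :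
    schattenNorm p (Matrix.fromBlocks B C Cᴴ E) ^ p
      ≤ schattenNorm p B ^ p + schattenNorm p E ^ p
        + schattenNorm p (Matrix.fromBlocks 0 C Cᴴ 0) ^ p := by
  have hq0 : (0 : ℝ) < p / 2 := by linarith
  have hq1 : p / 2 ≤ 1 := by linarith
  have hH : (Matrix.fromBlocks B C Cᴴ E).IsHermitian := isHermitian_fromBlocks_aux hB hE C
  have hF : (Matrix.fromBlocks 0 C Cᴴ 0 : Matrix (m ⊕ m) (m ⊕ m) ℂ).IsHermitian :=
    isHermitian_fromBlocks_aux Matrix.isHermitian_zero Matrix.isHermitian_zero C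
  rw [schatten_rpow_eq p hp1 hH, schatten_rpow_eq p hp1 hB, schatten_rpow_eq p hp1 hE,
    schatten_rpow_eq p hp1 hF]
  have psdH2 : ((Matrix.fromBlocks B C Cᴴ E) * (Matrix.fromBlocks B C Cᴴ E)).PosSemidef :=
    posSemidef_sq hH
  -- square of H
  have hH2 : (Matrix.fromBlocks B C Cᴴ E) * (Matrix.fromBlocks B C Cᴴ E)
      = Matrix.fromBlocks (B * B + C * Cᴴ) (B * C + C * E) (Cᴴ * B + E * Cᴴ)
          (Cᴴ * C + E * E) := by
    rw [Matrix.fromBlocks_multiply]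
  -- the signed conjugation
  have hUH : (Matrix.fromBlocks 1 0 0 (-1) : Matrix (m ⊕ m) (m ⊕ m) ℂ)ᴴ
      = Matrix.fromBlocks 1 0 0 (-1) := by
    rw [Matrix.fromBlocks_conjTranspose]; simp
  have hUU : (Matrix.fromBlocks 1 0 0 (-1) : Matrix (m ⊕ m) (m ⊕ m) ℂ)
      * Matrix.fromBlocks 1 0 0 (-1) = 1 := by
    rw [Matrix.fromBlocks_multiply]; simp [← Matrix.fromBlocks_one]
  have psdQ : ((Matrix.fromBlocks 1 0 0 (-1) : Matrix (m ⊕ m) (m ⊕ m) ℂ)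
      * ((Matrix.fromBlocks B C Cᴴ E) * (Matrix.fromBlocks B C Cᴴ E))
      * (Matrix.fromBlocks 1 0 0 (-1) : Matrix (m ⊕ m) (m ⊕ m) ℂ)ᴴ).PosSemidef :=
    psdH2.mul_mul_conjTranspose_same _
  -- G
  have psdBB : (B * B).PosSemidef := posSemidef_sq hB
  have psdEE : (E * E).PosSemidef := posSemidef_sq hE
  have psdCC : (C * Cᴴ).PosSemidef := Matrix.posSemidef_self_mul_conjTranspose C
  have psdCC' : (Cᴴ * C).PosSemidef := Matrix.posSemidef_conjTranspose_mul_self C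
  have psd1 : (B * B + C * Cᴴ).PosSemidef := psdBB.add psdCC
  have psd2 : (Cᴴ * C + E * E).PosSemidef := psdCC'.add psdEE
  have hGh : (Matrix.fromBlocks (B * B + C * Cᴴ) 0 0 (Cᴴ * C + E * E)
      : Matrix (m ⊕ m) (m ⊕ m) ℂ).IsHermitian := by
    have := isHermitian_fromBlocks_aux psd1.1 psd2.1 (0 : Matrix m m ℂ)
    simpa using this
  have hsum : ((Matrix.fromBlocks B C Cᴴ E) * (Matrix.fromBlocks B C Cᴴ E))
      + ((Matrix.fromBlocks 1 0 0 (-1) : Matrix (m ⊕ m) (m ⊕ m) ℂ)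
        * ((Matrix.fromBlocks B C Cᴴ E) * (Matrix.fromBlocks B C Cᴴ E))
        * (Matrix.fromBlocks 1 0 0 (-1) : Matrix (m ⊕ m) (m ⊕ m) ℂ)ᴴ)
      = (2 : ℂ) • (Matrix.fromBlocks (B * B + C * Cᴴ) 0 0 (Cᴴ * C + E * E)
          : Matrix (m ⊕ m) (m ⊕ m) ℂ) := by
    rw [hUH, hH2, sign_conj_aux, Matrix.fromBlocks_add, Matrix.fromBlocks_smul,
      Matrix.fromBlocks_inj]
    exact ⟨(two_smul ℂ _).symm, by rw [smul_zero]; abel, by rw [smul_zero]; abel, (two_smul ℂ _).symm⟩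
  have hcore := core psdH2 psdQ hGh hsum hq0 hq1
  have hQP : trp (p / 2) psdQ.1 = trp (p / 2) psdH2.1 := by
    refine trp_congr_charpoly _ _ _ ?_
    rw [hUH]
    exact charpoly_conj_aux hUU hUU
  have hGsplit : trp (p / 2) hGh = trp (p / 2) psd1.1 + trp (p / 2) psd2.1 :=
    trp_fromBlocks _ psd1.1 psd2.1 hGh
  have hsub1 : trp (p / 2) psd1.1 ≤ trp (p / 2) psdBB.1 + trp (p / 2) psdCC.1 :=
    trp_add_le psdBB psdCC hq0 hq1 psd1.1
  have hsub2 : trp (p / 2) psd2.1 ≤ trp (p / 2) psdCC'.1 + trp (p / 2) psdEE.1 :=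
    trp_add_le psdCC' psdEE hq0 hq1 psd2.1
  -- F squared
  have hF2 : (Matrix.fromBlocks 0 C Cᴴ 0 : Matrix (m ⊕ m) (m ⊕ m) ℂ)
      * Matrix.fromBlocks 0 C Cᴴ 0 = Matrix.fromBlocks (C * Cᴴ) 0 0 (Cᴴ * C) := by
    rw [Matrix.fromBlocks_multiply]; simp
  have hFblk : (Matrix.fromBlocks (C * Cᴴ) 0 0 (Cᴴ * C)
      : Matrix (m ⊕ m) (m ⊕ m) ℂ).IsHermitian := hF2 ▸ (isHermitian_sq hF)
  have hFsplit : trp (p / 2) (isHermitian_sq hF)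
      = trp (p / 2) psdCC.1 + trp (p / 2) psdCC'.1 := by
    rw [trp_congr hF2 (p / 2) (isHermitian_sq hF) hFblk]
    exact trp_fromBlocks _ psdCC.1 psdCC'.1 hFblk
  have e1 : trp (p / 2) (isHermitian_sq hH) = trp (p / 2) psdH2.1 := rfl
  have e2 : trp (p / 2) (isHermitian_sq hB) = trp (p / 2) psdBB.1 := rfl
  have e3 : trp (p / 2) (isHermitian_sq hE) = trp (p / 2) psdEE.1 := rfl
  linarith


lemma star_half : star ((2 : ℂ)⁻¹) = (2 : ℂ)⁻¹ := by
  rw [star_inv₀]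
  norm_num

lemma reM_isHermitian (X : Matrix m m ℂ) : (reM X).IsHermitian := by
  show (reM X)ᴴ = reM X
  unfold reM
  rw [Matrix.conjTranspose_smul, Matrix.conjTranspose_add, Matrix.conjTranspose_conjTranspose,
    star_half, add_comm]

lemma reM_zero : reM (0 : Matrix m m ℂ) = 0 := by
  unfold reM
  simp

lemma reM_smul_fromBlocks (z : ℂ) (A11 A12 A21 A22 : Matrix m m ℂ) :
    reM (z • Matrix.fromBlocks A11 A12 A21 A22)
      = Matrix.fromBlocks (reM (z • A11)) ((2⁻¹ : ℂ) • (z • A12 + star z • A21ᴴ))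
          (((2⁻¹ : ℂ) • (z • A12 + star z • A21ᴴ))ᴴ) (reM (z • A22)) := by
  unfold reM
  rw [show (z • Matrix.fromBlocks A11 A12 A21 A22)
      = Matrix.fromBlocks (z • A11) (z • A12) (z • A21) (z • A22) from
      Matrix.fromBlocks_smul z _ _ _ _]
  rw [Matrix.fromBlocks_conjTranspose, Matrix.fromBlocks_add, Matrix.fromBlocks_smul,
    Matrix.fromBlocks_inj]
  refine ⟨rfl, by rw [Matrix.conjTranspose_smul], ?_, rfl⟩
  simp [Matrix.conjTranspose_smul, Matrix.conjTranspose_add, star_half, add_comm]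

lemma trace_conjTranspose_mul (M : Matrix m m ℂ) :
    (Mᴴ * M).trace = ((∑ a, ∑ b, Complex.normSq (M a b) : ℝ) : ℂ) := by
  rw [Matrix.trace]
  push_cast
  rw [Finset.sum_comm]
  refine Finset.sum_congr rfl fun j _ => ?_
  rw [Matrix.diag_apply, Matrix.mul_apply]
  refine Finset.sum_congr rfl fun a _ => ?_
  rw [Matrix.conjTranspose_apply, Complex.star_def, mul_comm, Complex.mul_conj]

lemma sum_eigenvalues_eq_trace {A : Matrix m m ℂ} (hA : A.IsHermitian) :
    ((∑ i, hA.eigenvalues i : ℝ) : ℂ) = A.trace := by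
  conv_rhs => rw [hA.spectral_theorem, Unitary.conjStarAlgAut_apply]
  rw [Matrix.trace_mul_comm, ← Matrix.mul_assoc,
    Matrix.mem_unitaryGroup_iff'.mp hA.eigenvectorUnitary.2, Matrix.one_mul,
    Matrix.trace_diagonal]
  push_cast
  rfl

lemma eig_le_sum_normSq (M : Matrix m m ℂ) (i : m) :
    (Matrix.isHermitian_conjTranspose_mul_self M).eigenvalues i
      ≤ ∑ a, ∑ b, Complex.normSq (M a b) := by
  have hpsd := Matrix.posSemidef_conjTranspose_mul_self M
  have h2 : ∑ j, (Matrix.isHermitian_conjTranspose_mul_self M).eigenvalues j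
      = ∑ a, ∑ b, Complex.normSq (M a b) := by
    have := (sum_eigenvalues_eq_trace (Matrix.isHermitian_conjTranspose_mul_self M)).trans
      (trace_conjTranspose_mul M)
    exact_mod_cast this
  rw [← h2]
  exact Finset.single_le_sum (fun j _ => hpsd.eigenvalues_nonneg j) (Finset.mem_univ i)

lemma schatten_nonneg (p : ℝ) (A : Matrix m m ℂ) : 0 ≤ schattenNorm p A :=
  Real.rpow_nonneg (Finset.sum_nonneg fun i _ =>
    Real.rpow_nonneg (Real.sqrt_nonneg _) p) _

lemma reM_entry_bound (θ : ℝ) (A : Matrix m m ℂ) (a b : m) :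
    Complex.normSq ((reM (Complex.exp (θ * Complex.I) • A)) a b)
      ≤ (‖A a b‖ + ‖A b a‖) ^ 2 := by
  have habs : ‖Complex.exp (θ * Complex.I)‖ = 1 := by
    rw [Complex.norm_exp]
    simp
  have hentry : (reM (Complex.exp (θ * Complex.I) • A)) a b
      = (2⁻¹ : ℂ) * (Complex.exp (θ * Complex.I) * A a b
        + star (Complex.exp (θ * Complex.I)) * star (A b a)) := by
    unfold reM
    simp [Matrix.conjTranspose_apply, Matrix.smul_apply, Matrix.add_apply, smul_eq_mul]
  rw [← Complex.sq_norm]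
  have h1 : ‖Complex.exp (θ * Complex.I) * A a b‖ = ‖A a b‖ := by
    rw [norm_mul, habs, one_mul]
  have h2 : ‖star (Complex.exp (θ * Complex.I)) * star (A b a)‖
      = ‖A b a‖ := by
    rw [Complex.star_def, norm_mul, Complex.norm_conj,
      Complex.norm_conj, habs, one_mul]
  have hle : ‖(reM (Complex.exp (θ * Complex.I) • A)) a b‖
      ≤ ‖A a b‖ + ‖A b a‖ := by
    rw [hentry]
    have h3 := norm_add_le (Complex.exp (θ * Complex.I) * A a b)
      (star (Complex.exp (θ * Complex.I)) * star (A b a))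
    rw [h1, h2] at h3
    calc ‖(2⁻¹ : ℂ) * (Complex.exp (θ * Complex.I) * A a b
          + star (Complex.exp (θ * Complex.I)) * star (A b a))‖
        = ‖(2⁻¹ : ℂ)‖ * ‖Complex.exp (θ * Complex.I) * A a b
          + star (Complex.exp (θ * Complex.I)) * star (A b a)‖ := norm_mul _ _
      _ ≤ 1 * (‖A a b‖ + ‖A b a‖) := by
          have habsh : ‖(2⁻¹ : ℂ)‖ ≤ 1 := by
            rw [norm_inv, Complex.norm_two]
            norm_num
          exact mul_le_mul habsh h3 (norm_nonneg _) one_pos.le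
      _ = _ := one_mul _
  calc ‖_‖ ^ 2 ≤ (‖A a b‖ + ‖A b a‖) ^ 2 := by
        exact pow_le_pow_left₀ (norm_nonneg _) hle 2
    _ = _ := rfl


lemma schatten_theta_le_bound (p : ℝ) (hp : 1 ≤ p) (A : Matrix m m ℂ) (θ : ℝ) :
    schattenNorm p (reM (Complex.exp (θ * Complex.I) • A))
      ≤ ((Fintype.card m : ℝ) * Real.sqrt (∑ a, ∑ b,
          (‖A a b‖ + ‖A b a‖) ^ 2) ^ p) ^ (1 / p) := by
  have hp0 : (0 : ℝ) < p := lt_of_lt_of_le one_pos hp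
  have heig : ∀ i, (Matrix.isHermitian_conjTranspose_mul_self
      (reM (Complex.exp (θ * Complex.I) • A))).eigenvalues i
      ≤ ∑ a, ∑ b, (‖A a b‖ + ‖A b a‖) ^ 2 := by
    intro i
    refine (eig_le_sum_normSq _ i).trans ?_
    exact Finset.sum_le_sum fun a _ => Finset.sum_le_sum fun b _ => reM_entry_bound θ A a b
  unfold schattenNorm
  refine Real.rpow_le_rpow (Finset.sum_nonneg fun i _ =>
    Real.rpow_nonneg (Real.sqrt_nonneg _) p) ?_ (by positivity)
  calc ∑ i, Real.sqrt ((Matrix.isHermitian_conjTranspose_mul_self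
        (reM (Complex.exp (θ * Complex.I) • A))).eigenvalues i) ^ p
      ≤ ∑ _i : m, Real.sqrt (∑ a, ∑ b,
          (‖A a b‖ + ‖A b a‖) ^ 2) ^ p :=
        Finset.sum_le_sum fun i _ => Real.rpow_le_rpow (Real.sqrt_nonneg _)
          (Real.sqrt_le_sqrt (heig i)) hp0.le
    _ = _ := by rw [Finset.sum_const, Finset.card_univ, nsmul_eq_mul]

lemma wp_bddAbove (p : ℝ) (hp : 1 ≤ p) (A : Matrix m m ℂ) :
    BddAbove (Set.range fun θ : ℝ =>
      schattenNorm p (reM (Complex.exp (θ * Complex.I) • A))) := by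
  refine ⟨((Fintype.card m : ℝ) * Real.sqrt (∑ a, ∑ b,
      (‖A a b‖ + ‖A b a‖) ^ 2) ^ p) ^ (1 / p), ?_⟩
  rintro x ⟨θ, rfl⟩
  exact schatten_theta_le_bound p hp A θ

lemma schatten_le_wp (p : ℝ) (hp : 1 ≤ p) (A : Matrix m m ℂ) (θ : ℝ) :
    schattenNorm p (reM (Complex.exp (θ * Complex.I) • A)) ≤ wp p A :=
  le_ciSup (wp_bddAbove p hp A) θ

lemma wp_nonneg (p : ℝ) (hp : 1 ≤ p) (A : Matrix m m ℂ) : 0 ≤ wp p A :=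
  le_trans (schatten_nonneg p _) (schatten_le_wp p hp A 0)

end AuxW

theorem stmt_8 {n : ℕ} (p : ℝ) (hp1 : 1 ≤ p) (hp2 : p ≤ 2)
    (A11 A12 A21 A22 : Matrix (Fin n) (Fin n) ℂ) :
    wp p (Matrix.fromBlocks A11 A12 A21 A22) ^ p ≤
      wp p A11 ^ p + wp p A22 ^ p +
        2 * ((2 : ℝ) ^ (-(1 / p)) * wp p (Matrix.fromBlocks 0 A12 A21 0)) ^ p := by
  have hp0 : (0 : ℝ) < p := by linarith
  have hrhs : 2 * ((2 : ℝ) ^ (-(1 / p)) * wp p (Matrix.fromBlocks 0 A12 A21 0)) ^ p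
      = wp p (Matrix.fromBlocks 0 A12 A21 0) ^ p := by
    rw [Real.mul_rpow (Real.rpow_nonneg (by norm_num) _) (AuxW.wp_nonneg p hp1 _),
      ← Real.rpow_mul (by norm_num : (0 : ℝ) ≤ 2),
      show (-(1 / p)) * p = -1 by field_simp, Real.rpow_neg_one]
    ring
  rw [hrhs]
  have hS0 : 0 ≤ wp p A11 ^ p + wp p A22 ^ p + wp p (Matrix.fromBlocks 0 A12 A21 0) ^ p := by
    have h1 := Real.rpow_nonneg (AuxW.wp_nonneg p hp1 A11) p
    have h2 := Real.rpow_nonneg (AuxW.wp_nonneg p hp1 A22) p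
    have h3 := Real.rpow_nonneg (AuxW.wp_nonneg p hp1 (Matrix.fromBlocks 0 A12 A21 0)) p
    linarith
  have hpoint : ∀ θ : ℝ, schattenNorm p (reM (Complex.exp (θ * Complex.I)
      • Matrix.fromBlocks A11 A12 A21 A22))
      ≤ (wp p A11 ^ p + wp p A22 ^ p + wp p (Matrix.fromBlocks 0 A12 A21 0) ^ p) ^ (1 / p) := by
    intro θ
    have hdec := AuxW.reM_smul_fromBlocks (Complex.exp (θ * Complex.I)) A11 A12 A21 A22
    have hdecF := AuxW.reM_smul_fromBlocks (Complex.exp (θ * Complex.I)) 0 A12 A21 0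
    rw [smul_zero, AuxW.reM_zero] at hdecF
    have hkey := AuxW.key_schatten hp1 hp2
      (AuxW.reM_isHermitian (Complex.exp (θ * Complex.I) • A11))
      (AuxW.reM_isHermitian (Complex.exp (θ * Complex.I) • A22))
      ((2⁻¹ : ℂ) • (Complex.exp (θ * Complex.I) • A12
        + star (Complex.exp (θ * Complex.I)) • A21ᴴ))
    rw [← hdec, ← hdecF] at hkey
    have h1 : schattenNorm p (reM (Complex.exp (θ * Complex.I) • A11)) ^ p ≤ wp p A11 ^ p :=
      Real.rpow_le_rpow (AuxW.schatten_nonneg p _) (AuxW.schatten_le_wp p hp1 A11 θ) hp0.le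
    have h2 : schattenNorm p (reM (Complex.exp (θ * Complex.I) • A22)) ^ p ≤ wp p A22 ^ p :=
      Real.rpow_le_rpow (AuxW.schatten_nonneg p _) (AuxW.schatten_le_wp p hp1 A22 θ) hp0.le
    have h3 : schattenNorm p (reM (Complex.exp (θ * Complex.I)
        • Matrix.fromBlocks 0 A12 A21 0)) ^ p
        ≤ wp p (Matrix.fromBlocks 0 A12 A21 0) ^ p :=
      Real.rpow_le_rpow (AuxW.schatten_nonneg p _)
        (AuxW.schatten_le_wp p hp1 (Matrix.fromBlocks 0 A12 A21 0) θ) hp0.le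
    have hfinal : schattenNorm p (reM (Complex.exp (θ * Complex.I)
        • Matrix.fromBlocks A11 A12 A21 A22)) ^ p
        ≤ wp p A11 ^ p + wp p A22 ^ p + wp p (Matrix.fromBlocks 0 A12 A21 0) ^ p := by
      linarith
    have hx0 : 0 ≤ schattenNorm p (reM (Complex.exp (θ * Complex.I)
        • Matrix.fromBlocks A11 A12 A21 A22)) := AuxW.schatten_nonneg p _
    calc schattenNorm p (reM (Complex.exp (θ * Complex.I) • Matrix.fromBlocks A11 A12 A21 A22))
        = ((schattenNorm p (reM (Complex.exp (θ * Complex.I)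
            • Matrix.fromBlocks A11 A12 A21 A22))) ^ p) ^ (1 / p) := by
          rw [← Real.rpow_mul hx0, mul_one_div_cancel hp0.ne', Real.rpow_one]
      _ ≤ _ := Real.rpow_le_rpow (Real.rpow_nonneg hx0 p) hfinal (by positivity)
  have hsup : wp p (Matrix.fromBlocks A11 A12 A21 A22)
      ≤ (wp p A11 ^ p + wp p A22 ^ p + wp p (Matrix.fromBlocks 0 A12 A21 0) ^ p) ^ (1 / p) :=
    ciSup_le hpoint
  calc wp p (Matrix.fromBlocks A11 A12 A21 A22) ^ p
      ≤ ((wp p A11 ^ p + wp p A22 ^ p + wp p (Matrix.fromBlocks 0 A12 A21 0) ^ p)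
          ^ (1 / p)) ^ p :=
        Real.rpow_le_rpow (AuxW.wp_nonneg p hp1 _) hsup hp0.le
    _ = _ := by rw [← Real.rpow_mul hS0, one_div_mul_cancel hp0.ne', Real.rpow_one]
end
end
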